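/- Let A be a real d×d matrix and λ₁ > 0 a constant with ⟨x, Ax⟩ ≤ −λ₁‖x‖² for all x ∈ ℝ^d. Let f : ℝ^d → ℝ^d and g_j : ℝ^d → ℝ^d (j = 1,…,m) be differentiable, and suppose there exist p₁ ≥ 1 and L₂ ∈ ℝ such that 2⟨x − y, f(x) − f(y)⟩ + (2p₁ − 1)·Σ_{j=1}^m ‖g_j(x) − g_j(y)‖² ≤ L₂‖x − y‖² for all x, y ∈ ℝ^d. Set F(x) := Ax + f(x). Then for all x, y ∈ ℝ^d: 2⟨DF(x)y, y⟩ + (2p₁ − 1)·Σ_{j=1}^m ‖Dg_j(x)y‖² ≤ −(2λ₁ − L₂)‖y‖². -/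

import Mathlib

open scoped RealInnerProductSpace BigOperators

open Filter Topology

/-- Under the coupled monotonicity condition for `f` and the columns
`g j` of the diffusion coefficient, and negative definiteness of `A`, the derivatives of
`F x = A x + f x` and of the `g j` satisfy the corresponding monotonicity estimate. -/
theorem stmt_1 {d m : ℕ}
    (A : EuclideanSpace ℝ (Fin d) →L[ℝ] EuclideanSpace ℝ (Fin d))
    (lam₁ : ℝ) (hlam₁ : 0 < lam₁)
    (hA : ∀ x : EuclideanSpace ℝ (Fin d), ⟪x, A x⟫ ≤ -lam₁ * ‖x‖ ^ 2)
    (f : EuclideanSpace ℝ (Fin d) → EuclideanSpace ℝ (Fin d))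
    (g : Fin m → EuclideanSpace ℝ (Fin d) → EuclideanSpace ℝ (Fin d))
    (hf : Differentiable ℝ f) (hg : ∀ j, Differentiable ℝ (g j))
    (p₁ L₂ : ℝ) (hp₁ : 1 ≤ p₁)
    (hmono : ∀ x y : EuclideanSpace ℝ (Fin d),
      2 * ⟪x - y, f x - f y⟫ + (2 * p₁ - 1) * ∑ j, ‖g j x - g j y‖ ^ 2 ≤ L₂ * ‖x - y‖ ^ 2)
    (F : EuclideanSpace ℝ (Fin d) → EuclideanSpace ℝ (Fin d))
    (hF : ∀ x, F x = A x + f x) :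
    ∀ x y : EuclideanSpace ℝ (Fin d),
      2 * ⟪fderiv ℝ F x y, y⟫ + (2 * p₁ - 1) * ∑ j, ‖fderiv ℝ (g j) x y‖ ^ 2
        ≤ -(2 * lam₁ - L₂) * ‖y‖ ^ 2 := by
  intro x y
  have hFd : fderiv ℝ F x = (A : EuclideanSpace ℝ (Fin d) →L[ℝ] _) + fderiv ℝ f x := by
    have hFe : F = fun z => A z + f z := funext hF
    rw [hFe]
    exact (A.hasFDerivAt.add (hf x).hasFDerivAt).fderiv
  -- slope limits
  have hcurve : ∀ (h : EuclideanSpace ℝ (Fin d) → EuclideanSpace ℝ (Fin d)),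
      Differentiable ℝ h →
      Tendsto (slope (fun t : ℝ => h (x + t • y)) 0) (𝓝[≠] 0) (𝓝 (fderiv ℝ h x y)) := by
    intro h hh
    have hline : HasDerivAt (fun t : ℝ => x + t • y) y 0 := by
      simpa using ((hasDerivAt_id (0:ℝ)).smul_const y).const_add x
    have hc : HasDerivAt (fun t : ℝ => h (x + t • y)) (fderiv ℝ h x y) 0 := by
      have := (hh (x + (0:ℝ) • y)).hasFDerivAt.comp_hasDerivAt 0 hline
      simp only [zero_smul, add_zero] at this
      exact this
    exact hasDerivAt_iff_tendsto_slope.1 hc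
  have key : 2 * ⟪fderiv ℝ f x y, y⟫ + (2 * p₁ - 1) * ∑ j, ‖fderiv ℝ (g j) x y‖ ^ 2
      ≤ L₂ * ‖y‖ ^ 2 := by
    set φ : ℝ → ℝ := fun t =>
      2 * ⟪slope (fun t : ℝ => f (x + t • y)) 0 t, y⟫ +
        (2 * p₁ - 1) * ∑ j, ‖slope (fun t : ℝ => g j (x + t • y)) 0 t‖ ^ 2 with hφ
    have hlim : Tendsto φ (𝓝[≠] 0)
        (𝓝 (2 * ⟪fderiv ℝ f x y, y⟫ + (2 * p₁ - 1) * ∑ j, ‖fderiv ℝ (g j) x y‖ ^ 2)) := by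
      apply Tendsto.add
      · exact (((hcurve f hf).inner tendsto_const_nhds)).const_mul 2
      · refine Tendsto.const_mul _ ?_
        exact tendsto_finset_sum _ fun j _ => ((hcurve (g j) (hg j)).norm).pow 2
    refine le_of_tendsto hlim ?_
    filter_upwards [self_mem_nhdsWithin] with t ht
    have ht' : (t : ℝ) ≠ 0 := ht
    have ht2 : (0:ℝ) < t ^ 2 := by positivity
    have hm := hmono (x + t • y) x
    have hsub : x + t • y - x = t • y := by abel
    rw [hsub] at hm
    -- hm : 2 * ⟪t • y, f (x+t•y) - f x⟫ + c * ∑ ‖g j (x+t•y) - g j x‖^2 ≤ L₂ * ‖t•y‖^2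
    set a : ℝ := ⟪f (x + t • y) - f x, y⟫ with ha
    set b : ℝ := ∑ j, ‖g j (x + t • y) - g j x‖ ^ 2 with hb
    have hm' : 2 * (t * a) + (2 * p₁ - 1) * b ≤ L₂ * (t ^ 2 * ‖y‖ ^ 2) := by
      have e1 : ⟪t • y, f (x + t • y) - f x⟫ = t * a := by
        rw [real_inner_smul_left, real_inner_comm]
      have e2 : ‖t • y‖ ^ 2 = t ^ 2 * ‖y‖ ^ 2 := by
        rw [norm_smul]; rw [mul_pow]; simp [sq_abs]
      rw [e1, e2] at hm
      linarith
    have hφt : φ t = (t ^ 2)⁻¹ * (2 * (t * a) + (2 * p₁ - 1) * b) := by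
      rw [hφ]
      have e1 : ⟪slope (fun t : ℝ => f (x + t • y)) 0 t, y⟫ = t⁻¹ * a := by
        simp only [slope, vsub_eq_sub, sub_zero, zero_smul, add_zero]
        rw [real_inner_smul_left]
      have e2 : ∀ j, ‖slope (fun t : ℝ => g j (x + t • y)) 0 t‖ ^ 2
          = t⁻¹ ^ 2 * ‖g j (x + t • y) - g j x‖ ^ 2 := by
        intro j
        simp only [slope, vsub_eq_sub, sub_zero, zero_smul, add_zero]
        rw [norm_smul, mul_pow]
        simp [sq_abs]
      simp only [e1, e2, ← Finset.mul_sum, ← hb]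
      field_simp
    rw [hφt]
    calc (t ^ 2)⁻¹ * (2 * (t * a) + (2 * p₁ - 1) * b)
        ≤ (t ^ 2)⁻¹ * (L₂ * (t ^ 2 * ‖y‖ ^ 2)) :=
          mul_le_mul_of_nonneg_left hm' (le_of_lt (inv_pos.2 ht2))
      _ = L₂ * ‖y‖ ^ 2 := by field_simp
  have hAy : ⟪A y, y⟫ ≤ -lam₁ * ‖y‖ ^ 2 := by
    rw [real_inner_comm]; exact hA y
  rw [hFd]
  simp only [ContinuousLinearMap.add_apply, inner_add_left]
  nlinarith [key, hAy]
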